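/- (RDP core of PTR-Gaussian via binarization.) Let σ > 0, α > 1, and let q, q' ∈ ℝ with |q − q'| ≤ 1. Let γ = N(0, σ²) and set a = γ({ z : q + z > 1 }) and a' = γ({ z : q' + z > 1 }), assuming 0 < a' < 1. Then a^α · (a')^(1−α) + (1 − a)^α · (1 − a')^(1−α) ≤ exp( α·(α − 1)/(2σ²) ); i.e., the Rényi divergence of order α between the binary outcomes of the noisy threshold test on neighboring gaps is at most α/(2σ²). -/

import Mathlib

open MeasureTheory ProbabilityTheory
open scoped NNReal ENNReal

section PTRAux
open Real


lemma gauss_rpow_mul (m m' x α : ℝ) (V : ℝ≥0) (hV : 0 < (V:ℝ)) :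
    gaussianPDFReal m V x ^ α * gaussianPDFReal m' V x ^ (1-α)
      = Real.exp (α*(α-1)*(m-m')^2 / (2*(V:ℝ)))
        * gaussianPDFReal (α*m+(1-α)*m') V x := by
  have hc : (0:ℝ) < (√(2 * π * V))⁻¹ := by positivity
  simp only [gaussianPDFReal]
  rw [Real.mul_rpow hc.le (Real.exp_nonneg _), Real.mul_rpow hc.le (Real.exp_nonneg _),
      ← Real.exp_mul, ← Real.exp_mul]
  have hcc : (√(2 * π * V))⁻¹ ^ α * (√(2 * π * V))⁻¹ ^ (1-α) = (√(2 * π * V))⁻¹ := by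
    rw [← Real.rpow_add hc]; simp
  calc (√(2 * π * ↑V))⁻¹ ^ α * rexp (-(x - m) ^ 2 / (2 * ↑V) * α) *
      ((√(2 * π * ↑V))⁻¹ ^ (1 - α) * rexp (-(x - m') ^ 2 / (2 * ↑V) * (1-α)))
      = ((√(2 * π * ↑V))⁻¹ ^ α * (√(2 * π * ↑V))⁻¹ ^ (1-α)) *
        (rexp (-(x - m) ^ 2 / (2 * ↑V) * α) * rexp (-(x - m') ^ 2 / (2 * ↑V) * (1-α))) := by ring
    _ = (√(2 * π * ↑V))⁻¹ * rexp (α*(α-1)*(m-m')^2 / (2*(V:ℝ)) + -(x - (α*m+(1-α)*m')) ^ 2 / (2 * ↑V)) := by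
        rw [hcc, ← Real.exp_add]
        congr 1
        field_simp
        ring
    _ = _ := by rw [Real.exp_add]; ring


lemma holder_event {α : ℝ} (hα : 1 < α) (V : ℝ≥0) (hV : V ≠ 0) (m m' : ℝ)
    (s : Set ℝ)
    (hB0 : ∫⁻ x in s, gaussianPDF m' V x ≠ 0)
    (hBt : ∫⁻ x in s, gaussianPDF m' V x ≠ ⊤) :
    (∫⁻ x in s, gaussianPDF m V x) ^ α * (∫⁻ x in s, gaussianPDF m' V x) ^ (1 - α)
      ≤ ∫⁻ x in s, gaussianPDF m V x ^ α * gaussianPDF m' V x ^ (1 - α) := by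
  set f := gaussianPDF m V
  set g := gaussianPDF m' V
  have hα0 : (0:ℝ) < α := lt_trans one_pos hα
  have hαne : α ≠ 0 := hα0.ne'
  have hg0 : ∀ x, g x ≠ 0 := fun x => (gaussianPDF_pos m' hV x).ne'
  have hgt : ∀ x, g x ≠ ⊤ := fun x => ENNReal.ofReal_ne_top
  have hft : ∀ x, f x ≠ ⊤ := fun x => ENNReal.ofReal_ne_top
  have hfm : Measurable f := measurable_gaussianPDF m V
  have hgm : Measurable g := measurable_gaussianPDF m' V
  set I := ∫⁻ x in s, f x ^ α * g x ^ (1 - α) with hI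
  by_cases hIt : I = ⊤
  · rw [hIt]; exact le_top
  set A := ∫⁻ x in s, f x with hA
  set B := ∫⁻ x in s, g x with hB
  have hpq : Real.HolderConjugate α (α / (α - 1)) := Real.HolderConjugate.conjExponent hα
  set u : ℝ → ℝ≥0∞ := fun x => (f x ^ α * g x ^ (1 - α)) ^ (1/α) with hu
  set v : ℝ → ℝ≥0∞ := fun x => g x ^ ((α - 1)/α) with hv
  have huv : ∀ x, (u * v) x = f x := by
    intro x
    have h1 : f x ^ α ≠ ⊤ := ENNReal.rpow_ne_top_of_nonneg hα0.le (hft x)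
    have h2 : g x ^ (1 - α) ≠ ⊤ := by simp [ENNReal.rpow_eq_top_iff, hgt x, hg0 x]
    simp only [u, v, Pi.mul_apply]
    rw [ENNReal.mul_rpow_of_ne_top h1 h2, ← ENNReal.rpow_mul, ← ENNReal.rpow_mul,
      mul_assoc, ← ENNReal.rpow_add _ _ (hg0 x) (hgt x)]
    have : (1 - α) * (1/α) + (α - 1)/α = 0 := by field_simp; ring
    rw [this, ENNReal.rpow_zero, mul_one, mul_one_div, div_self hαne, ENNReal.rpow_one]
  have hum : Measurable u := ((hfm.pow_const _).mul (hgm.pow_const _)).pow_const _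
  have hvm : Measurable v := hgm.pow_const _
  have key := ENNReal.lintegral_mul_le_Lp_mul_Lq (volume.restrict s) hpq
    hum.aemeasurable hvm.aemeasurable
  have hu2 : ∀ x, u x ^ α = f x ^ α * g x ^ (1 - α) := by
    intro x
    rw [hu, ← ENNReal.rpow_mul, one_div, inv_mul_cancel₀ hαne, ENNReal.rpow_one]
  have hv2 : ∀ x, v x ^ (α / (α - 1)) = g x := by
    intro x
    rw [hv, ← ENNReal.rpow_mul]
    have : (α - 1)/α * (α / (α - 1)) = 1 := by
      field_simp
      rw [div_self (sub_ne_zero.2 hα.ne')]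
    rw [this, ENNReal.rpow_one]
  simp only [huv, hu2, hv2] at key
  have hq' : 1 / (α / (α - 1)) = (α - 1)/α := by
    rw [one_div_div]
  rw [hq'] at key
  -- key : A ≤ I ^ (1/α) * B ^ ((α-1)/α)
  have key2 : A ^ α ≤ I * B ^ (α - 1) := by
    calc A ^ α ≤ (I ^ (1/α) * B ^ ((α - 1)/α)) ^ α :=
          ENNReal.rpow_le_rpow key hα0.le
      _ = I * B ^ (α - 1) := by
          rw [ENNReal.mul_rpow_of_ne_top
            (ENNReal.rpow_ne_top_of_nonneg (by positivity) hIt)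
            (ENNReal.rpow_ne_top_of_nonneg (div_nonneg (by linarith) hα0.le) hBt),
            ← ENNReal.rpow_mul, ← ENNReal.rpow_mul, one_div, inv_mul_cancel₀ hαne,
            ENNReal.rpow_one, div_mul_cancel₀]
          exact hαne
  calc A ^ α * B ^ (1 - α) ≤ (I * B ^ (α - 1)) * B ^ (1 - α) :=
        mul_le_mul_left key2 _
    _ = I := by
        rw [mul_assoc, ← ENNReal.rpow_add _ _ hB0 hBt]
        simp

lemma total_int {α : ℝ} (hα : 1 < α) (V : ℝ≥0) (hV : V ≠ 0) (m m' : ℝ) :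
    ∫⁻ x, gaussianPDF m V x ^ α * gaussianPDF m' V x ^ (1-α)
      = ENNReal.ofReal (Real.exp (α*(α-1)*(m-m')^2/(2*(V:ℝ)))) := by
  have hVpos : 0 < (V:ℝ) := lt_of_le_of_ne V.coe_nonneg (by exact_mod_cast hV.symm)
  have hpt : ∀ x, gaussianPDF m V x ^ α * gaussianPDF m' V x ^ (1-α)
      = ENNReal.ofReal (Real.exp (α*(α-1)*(m-m')^2/(2*(V:ℝ))))
        * ENNReal.ofReal (gaussianPDFReal (α*m+(1-α)*m') V x) := by
    intro x
    rw [gaussianPDF_def, gaussianPDF_def]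
    rw [ENNReal.ofReal_rpow_of_pos (gaussianPDFReal_pos _ _ _ hV),
      ENNReal.ofReal_rpow_of_pos (gaussianPDFReal_pos _ _ _ hV),
      ← ENNReal.ofReal_mul (Real.rpow_nonneg (gaussianPDFReal_nonneg _ _ _) _),
      gauss_rpow_mul m m' x α V hVpos,
      ENNReal.ofReal_mul (Real.exp_nonneg _)]
  simp_rw [hpt]
  rw [lintegral_const_mul _ ((measurable_gaussianPDFReal _ _).ennreal_ofReal)]
  rw [lintegral_gaussianPDFReal_eq_one _ hV, mul_one]

end PTRAux

theorem ptr_gaussian_binary_rdp (σ α q q' : ℝ) (hσ : 0 < σ) (hα : 1 < α)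
    (hqq : |q - q'| ≤ 1) (a a' : ℝ)
    (ha : a = (gaussianReal 0 ⟨σ ^ 2, sq_nonneg σ⟩ {z : ℝ | q + z > 1}).toReal)
    (ha' : a' = (gaussianReal 0 ⟨σ ^ 2, sq_nonneg σ⟩ {z : ℝ | q' + z > 1}).toReal)
    (ha'pos : 0 < a') (ha'lt : a' < 1) :
    a ^ α * a' ^ (1 - α) + (1 - a) ^ α * (1 - a') ^ (1 - α) ≤
      Real.exp (α * (α - 1) / (2 * σ ^ 2)) := by
  set V : ℝ≥0 := ⟨σ ^ 2, sq_nonneg σ⟩ with hVdef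
  have hVR : (V:ℝ) = σ ^ 2 := rfl
  have hV : V ≠ 0 := by
    intro h
    have : (V:ℝ) = 0 := by rw [h]; simp
    rw [hVR] at this; nlinarith
  -- identify the measures with lintegrals
  have hmeas : ∀ r : ℝ, gaussianReal 0 V {z : ℝ | r + z > 1}
      = ∫⁻ x in Set.Ioi (1:ℝ), gaussianPDF r V x := by
    intro r
    have h1 : {z : ℝ | r + z > 1} = (· + r) ⁻¹' Set.Ioi 1 := by
      ext z; simp only [Set.mem_setOf_eq, Set.mem_preimage, Set.mem_Ioi, gt_iff_lt]
      constructor <;> intro <;> linarith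
    rw [h1, ← Measure.map_apply (measurable_add_const r) measurableSet_Ioi,
      gaussianReal_map_add_const, zero_add, gaussianReal_apply _ hV]
  have hmeasI : ∀ r : ℝ, gaussianReal r V (Set.Iic (1:ℝ))
      = ∫⁻ x in Set.Iic (1:ℝ), gaussianPDF r V x := fun r => gaussianReal_apply _ hV _
  set A := ∫⁻ x in Set.Ioi (1:ℝ), gaussianPDF q V x with hAdef
  set A' := ∫⁻ x in Set.Ioi (1:ℝ), gaussianPDF q' V x with hA'def
  set C := ∫⁻ x in Set.Iic (1:ℝ), gaussianPDF q V x with hCdef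
  set C' := ∫⁻ x in Set.Iic (1:ℝ), gaussianPDF q' V x with hC'def
  have hArw : ∀ r : ℝ, (∫⁻ x in Set.Ioi (1:ℝ), gaussianPDF r V x) = gaussianReal r V (Set.Ioi 1) := by
    intro r; rw [gaussianReal_apply _ hV]
  have hA1 : A ≤ 1 := by rw [hAdef, hArw]; exact prob_le_one
  have hA'1 : A' ≤ 1 := by rw [hA'def, hArw]; exact prob_le_one
  have hC1 : C ≤ 1 := by rw [hCdef, ← hmeasI]; exact prob_le_one
  have hC'1 : C' ≤ 1 := by rw [hC'def, ← hmeasI]; exact prob_le_one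
  have hAt : A ≠ ⊤ := (lt_of_le_of_lt hA1 ENNReal.one_lt_top).ne
  have hA't : A' ≠ ⊤ := (lt_of_le_of_lt hA'1 ENNReal.one_lt_top).ne
  have hCt : C ≠ ⊤ := (lt_of_le_of_lt hC1 ENNReal.one_lt_top).ne
  have hC't : C' ≠ ⊤ := (lt_of_le_of_lt hC'1 ENNReal.one_lt_top).ne
  -- real values
  have haA : a = A.toReal := by rw [ha, hmeas q]
  have ha'A : a' = A'.toReal := by rw [ha', hmeas q']
  have hcompl : ∀ r : ℝ, gaussianReal r V (Set.Iic (1:ℝ))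
      = 1 - gaussianReal r V (Set.Ioi 1) := by
    intro r
    rw [← Set.compl_Ioi, measure_compl measurableSet_Ioi (measure_ne_top _ _)]
    simp
  have hCval : C.toReal = 1 - a := by
    rw [hCdef, ← hmeasI, hcompl, ENNReal.toReal_sub_of_le (by rw [← hArw]; exact hA1) ENNReal.one_ne_top,
      ENNReal.toReal_one, ← hArw q, ← haA]
  have hC'val : C'.toReal = 1 - a' := by
    rw [hC'def, ← hmeasI, hcompl, ENNReal.toReal_sub_of_le (by rw [← hArw]; exact hA'1) ENNReal.one_ne_top,
      ENNReal.toReal_one, ← hArw q', ← ha'A]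
  have hA'0 : A' ≠ 0 := by
    intro h; rw [ha'A, h] at ha'pos; simp at ha'pos
  have hC'0 : C' ≠ 0 := by
    intro h
    have h0 : C'.toReal = 0 := by rw [h]; simp
    rw [hC'val] at h0; linarith
  -- Hölder bounds and total integral
  have h1 := holder_event hα V hV q q' (Set.Ioi 1) hA'0 hA't
  have h2 := holder_event hα V hV q q' (Set.Iic 1) hC'0 hC't
  have hsum : (∫⁻ x in Set.Ioi (1:ℝ), gaussianPDF q V x ^ α * gaussianPDF q' V x ^ (1-α))
      + (∫⁻ x in Set.Iic (1:ℝ), gaussianPDF q V x ^ α * gaussianPDF q' V x ^ (1-α))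
      = ∫⁻ x, gaussianPDF q V x ^ α * gaussianPDF q' V x ^ (1-α) := by
    rw [← Set.compl_Ioi]
    exact lintegral_add_compl _ measurableSet_Ioi
  have hS : A ^ α * A' ^ (1-α) + C ^ α * C' ^ (1-α)
      ≤ ENNReal.ofReal (Real.exp (α*(α-1)*(q-q')^2/(2*σ^2))) := by
    refine le_trans (add_le_add h1 h2) ?_
    rw [hsum, total_int hα V hV q q', hVR]
  have hExp : Real.exp (α*(α-1)*(q-q')^2/(2*σ^2)) ≤ Real.exp (α*(α-1)/(2*σ^2)) := by
    apply Real.exp_le_exp.2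
    have hsq : (q-q')^2 ≤ 1 := by
      rw [← sq_abs]; nlinarith [abs_nonneg (q-q')]
    have h3 : α*(α-1)*(q-q')^2 ≤ α*(α-1) := by
      nlinarith [mul_nonneg (mul_nonneg (by linarith : (0:ℝ) ≤ α) (by linarith : (0:ℝ) ≤ α-1)) (by linarith : (0:ℝ) ≤ 1-(q-q')^2)]
    have h4 : (0:ℝ) < 2*σ^2 := by positivity
    exact div_le_div_of_nonneg_right h3 h4.le |>.trans_eq rfl
  have hfin1 : A ^ α * A' ^ (1-α) ≠ ⊤ :=
    ENNReal.mul_ne_top (ENNReal.rpow_ne_top_of_nonneg (by linarith) hAt)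
      (by simp [ENNReal.rpow_eq_top_iff, hA'0, hA't])
  have hfin2 : C ^ α * C' ^ (1-α) ≠ ⊤ :=
    ENNReal.mul_ne_top (ENNReal.rpow_ne_top_of_nonneg (by linarith) hCt)
      (by simp [ENNReal.rpow_eq_top_iff, hC'0, hC't])
  have e1 : a ^ α * a' ^ (1-α) = (A ^ α * A' ^ (1-α)).toReal := by
    rw [haA, ha'A, ENNReal.toReal_rpow, ENNReal.toReal_rpow, ← ENNReal.toReal_mul]
  have e2 : (1-a) ^ α * (1-a') ^ (1-α) = (C ^ α * C' ^ (1-α)).toReal := by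
    rw [← hCval, ← hC'val, ENNReal.toReal_rpow, ENNReal.toReal_rpow, ← ENNReal.toReal_mul]
  rw [e1, e2, ← ENNReal.toReal_add hfin1 hfin2]
  exact ENNReal.toReal_le_of_le_ofReal (Real.exp_nonneg _)
    (le_trans hS (ENNReal.ofReal_le_ofReal hExp))
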